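/- For integers n ≥ 1 and t > 0, the modified Bessel functions of the first kind satisfy I_{n+1}(t)/I_n(t) ≥ √(1 + ((n+1)/t)²) - (n+1)/t. -/

import Mathlib

/-- Modified Bessel function of the first kind of integer order `m` (with the
convention `I_{-m} = I_m`), via its power series. -/
noncomputable def besselI (m : ℤ) (t : ℝ) : ℝ :=
  ∑' k : ℕ, (t / 2) ^ (2 * k + m.natAbs) / ((k.factorial : ℝ) * ((k + m.natAbs).factorial : ℝ))

namespace BesselAux

open Finset

/-- The `k`-th term of the power series of `I_μ` in the variable `x = t/2`. -/
noncomputable def bt (x : ℝ) (μ k : ℕ) : ℝ :=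
  x ^ (2 * k + μ) / ((k.factorial : ℝ) * ((k + μ).factorial : ℝ))

lemma bt_pos {x : ℝ} (hx : 0 < x) (μ k : ℕ) : 0 < bt x μ k := by
  unfold bt; positivity

lemma bt_summable {x : ℝ} (hx : 0 < x) (μ : ℕ) : Summable (bt x μ) := by
  have hg : Summable (fun k : ℕ => x ^ μ * ((x ^ 2) ^ k / k.factorial)) :=
    (Real.summable_pow_div_factorial (x ^ 2)).mul_left _
  refine Summable.of_nonneg_of_le (fun k => (bt_pos hx μ k).le) (fun k => ?_) hg
  unfold bt
  have hxe : x ^ (2 * k + μ) = x ^ μ * (x ^ 2) ^ k := by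
    rw [← pow_mul, ← pow_add]; ring_nf
  rw [hxe, mul_div_assoc]
  gcongr
  exact le_mul_of_one_le_right (by positivity)
    (by exact_mod_cast (k + μ).factorial_pos)

lemma bt_norm_summable {x : ℝ} (hx : 0 < x) (μ : ℕ) :
    Summable fun k => ‖bt x μ k‖ := by
  simpa [Real.norm_of_nonneg (bt_pos hx μ _).le] using bt_summable hx μ

lemma bt_tsum_pos {x : ℝ} (hx : 0 < x) (μ : ℕ) : 0 < ∑' k, bt x μ k :=
  Summable.tsum_pos (bt_summable hx μ) (fun k => (bt_pos hx μ k).le) 0 (bt_pos hx μ 0)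

lemma bt_zero {x : ℝ} (hx : 0 < x) (μ : ℕ) :
    bt x μ 0 = (((μ : ℝ) + 1) / x) * bt x (μ + 1) 0 := by
  unfold bt
  have h1 : (μ + 1).factorial = (μ + 1) * μ.factorial := Nat.factorial_succ μ
  simp only [Nat.zero_add, Nat.mul_zero, Nat.zero_add, zero_add, Nat.factorial_zero, h1,
    Nat.cast_one, one_mul, Nat.cast_mul, pow_succ]
  have hf : (μ.factorial : ℝ) ≠ 0 := by exact_mod_cast μ.factorial_pos.ne'
  push_cast
  field_simp

lemma bt_step {x : ℝ} (hx : 0 < x) (μ k : ℕ) :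
    bt x μ (k + 1) = bt x (μ + 2) k + (((μ : ℝ) + 1) / x) * bt x (μ + 1) (k + 1) := by
  unfold bt
  have h1 : k + 1 + μ = k + μ + 1 := by omega
  have h2 : k + (μ + 2) = k + μ + 2 := by omega
  have h3 : k + 1 + (μ + 1) = k + μ + 2 := by omega
  have e1 : 2 * (k + 1) + μ = (2 * k + μ) + 2 := by omega
  have e2 : 2 * k + (μ + 2) = (2 * k + μ) + 2 := by omega
  have e3 : 2 * (k + 1) + (μ + 1) = (2 * k + μ) + 3 := by omega
  rw [h1, h2, h3, e1, e2, e3]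
  rw [show (k + μ + 2).factorial = (k + μ + 2) * ((k + μ + 1) * (k + μ).factorial) by
        rw [Nat.factorial_succ, Nat.factorial_succ],
      show (k + μ + 1).factorial = (k + μ + 1) * (k + μ).factorial from Nat.factorial_succ _,
      Nat.factorial_succ k]
  have hk : (k.factorial : ℝ) ≠ 0 := by exact_mod_cast k.factorial_pos.ne'
  have hkm : ((k + μ).factorial : ℝ) ≠ 0 := by exact_mod_cast (k + μ).factorial_pos.ne'
  push_cast
  rw [pow_add, pow_add, pow_add]
  field_simp
  ring

/-- Three-term recurrence `I_μ = I_{μ+2} + (2(μ+1)/t) I_{μ+1}` at the level of sums. -/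
lemma bt_recur {x : ℝ} (hx : 0 < x) (μ : ℕ) :
    ∑' k, bt x μ k = ∑' k, bt x (μ + 2) k + (((μ : ℝ) + 1) / x) * ∑' k, bt x (μ + 1) k := by
  have sμ := bt_summable hx μ
  have s1 := bt_summable hx (μ + 1)
  have s2 := bt_summable hx (μ + 2)
  have s1' : Summable (fun k => bt x (μ + 1) (k + 1)) := (summable_nat_add_iff 1).2 s1
  calc ∑' k, bt x μ k
      = bt x μ 0 + ∑' k, bt x μ (k + 1) := Summable.tsum_eq_zero_add sμ
    _ = bt x μ 0 + ∑' k, (bt x (μ + 2) k + (((μ : ℝ) + 1) / x) * bt x (μ + 1) (k + 1)) := by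
        rw [tsum_congr (fun k => bt_step hx μ k)]
    _ = bt x μ 0 + (∑' k, bt x (μ + 2) k
          + (((μ : ℝ) + 1) / x) * ∑' k, bt x (μ + 1) (k + 1)) := by
        rw [Summable.tsum_add s2 (s1'.mul_left _), tsum_mul_left]
    _ = ∑' k, bt x (μ + 2) k + (((μ : ℝ) + 1) / x) * ∑' k, bt x (μ + 1) k := by
        rw [bt_zero hx μ, Summable.tsum_eq_zero_add s1]
        ring

/-- Vandermonde-type evaluation of the relevant binomial sums. -/
lemma vand (m M s : ℕ) :
    ∑ j ∈ range (m + 1), m.choose j * M.choose (j + s) = (m + M).choose (m + s) := by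
  have step1 : ∑ j ∈ range (m + 1), m.choose j * M.choose (j + s)
      = ∑ j ∈ range (m + 1), m.choose (m - j) * M.choose (m + s - (m - j)) := by
    apply Finset.sum_congr rfl
    intro j hj
    rw [mem_range] at hj
    have hjm : j ≤ m := by omega
    rw [Nat.choose_symm hjm, show m + s - (m - j) = j + s by omega]
  have step2 : ∑ j ∈ range (m + 1), m.choose (m - j) * M.choose (m + s - (m - j))
      = ∑ i ∈ range (m + 1), m.choose i * M.choose (m + s - i) := by
    have := Finset.sum_range_reflect (fun i => m.choose i * M.choose (m + s - i)) (m + 1)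
    simpa using this
  have step3 : ∑ i ∈ range (m + 1), m.choose i * M.choose (m + s - i)
      = ∑ i ∈ range (m + s + 1), m.choose i * M.choose (m + s - i) := by
    apply Finset.sum_subset (Finset.range_subset_range.2 (by omega))
    intro i hi hni
    rw [mem_range] at hi hni
    have : m < i := by omega
    rw [Nat.choose_eq_zero_of_lt this, zero_mul]
  rw [step1, step2, step3, Nat.add_choose_eq, Finset.Nat.sum_antidiagonal_eq_sum_range_succ_mk]

lemma S_le (m μ : ℕ) :
    ∑ j ∈ range (m + 1), m.choose j * (m + 2 * μ + 2).choose (j + μ)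
      ≤ ∑ j ∈ range (m + 1), m.choose j * (m + 2 * μ + 2).choose (j + (μ + 1)) := by
  rw [vand m (m + 2 * μ + 2) μ, vand m (m + 2 * μ + 2) (μ + 1)]
  have h := Nat.choose_le_middle (m + μ) (m + (m + 2 * μ + 2))
  rw [show (m + (m + 2 * μ + 2)) / 2 = m + (μ + 1) by omega] at h
  exact h

lemma key (x : ℝ) (u v m j : ℕ) (hj : j ≤ m) :
    bt x u j * bt x v (m - j)
      = x ^ (2 * m + u + v) * ((m.choose j : ℝ) * ((m + u + v).choose (j + u) : ℝ))
        / ((m.factorial : ℝ) * ((m + u + v).factorial : ℝ)) := by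
  obtain ⟨k, rfl⟩ : ∃ k, m = j + k := ⟨m - j, by omega⟩
  have hmj : j + k - j = k := by omega
  have c1 : ((j + k).choose j : ℝ) * ((j.factorial : ℝ) * (k.factorial : ℝ))
      = (j + k).factorial := by
    have := Nat.choose_mul_factorial_mul_factorial (show j ≤ j + k by omega)
    rw [hmj] at this
    exact_mod_cast by push_cast [← this]; ring
  have hju : j + u ≤ j + k + u + v := by omega
  have c2 : ((j + k + u + v).choose (j + u) : ℝ)
        * (((j + u).factorial : ℝ) * ((k + v).factorial : ℝ))
      = (j + k + u + v).factorial := by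
    have := Nat.choose_mul_factorial_mul_factorial hju
    rw [show j + k + u + v - (j + u) = k + v by omega] at this
    exact_mod_cast by push_cast [← this]; ring
  unfold bt
  rw [hmj]
  have hf1 : (j.factorial : ℝ) ≠ 0 := by exact_mod_cast j.factorial_pos.ne'
  have hf2 : (k.factorial : ℝ) ≠ 0 := by exact_mod_cast k.factorial_pos.ne'
  have hf3 : ((j + u).factorial : ℝ) ≠ 0 := by exact_mod_cast (j + u).factorial_pos.ne'
  have hf4 : ((k + v).factorial : ℝ) ≠ 0 := by exact_mod_cast (k + v).factorial_pos.ne'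
  have hc1 : ((j + k).choose j : ℝ) ≠ 0 := by
    exact_mod_cast (Nat.choose_pos (show j ≤ j + k by omega)).ne'
  have hc2 : ((j + k + u + v).choose (j + u) : ℝ) ≠ 0 := by
    exact_mod_cast (Nat.choose_pos hju).ne'
  rw [← c1, ← c2]
  rw [div_mul_div_comm, ← pow_add, show 2 * j + u + (2 * k + v) = 2 * (j + k) + u + v by omega]
  field_simp

lemma per_m {x : ℝ} (hx : 0 < x) (μ m : ℕ) :
    ∑ j ∈ range (m + 1), bt x μ j * bt x (μ + 2) (m - j)
      ≤ ∑ j ∈ range (m + 1), bt x (μ + 1) j * bt x (μ + 1) (m - j) := by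
  have e1 : ∀ j ∈ range (m + 1), bt x μ j * bt x (μ + 2) (m - j)
      = x ^ (2 * m + 2 * μ + 2) / ((m.factorial : ℝ) * ((m + 2 * μ + 2).factorial : ℝ))
        * ((m.choose j * (m + 2 * μ + 2).choose (j + μ) : ℕ) : ℝ) := by
    intro j hj
    rw [mem_range] at hj
    rw [key x μ (μ + 2) m j (by omega)]
    rw [show m + μ + (μ + 2) = m + 2 * μ + 2 by omega,
        show 2 * m + μ + (μ + 2) = 2 * m + 2 * μ + 2 by omega]
    push_cast
    ring
  have e2 : ∀ j ∈ range (m + 1), bt x (μ + 1) j * bt x (μ + 1) (m - j)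
      = x ^ (2 * m + 2 * μ + 2) / ((m.factorial : ℝ) * ((m + 2 * μ + 2).factorial : ℝ))
        * ((m.choose j * (m + 2 * μ + 2).choose (j + (μ + 1)) : ℕ) : ℝ) := by
    intro j hj
    rw [mem_range] at hj
    rw [key x (μ + 1) (μ + 1) m j (by omega)]
    rw [show m + (μ + 1) + (μ + 1) = m + 2 * μ + 2 by omega,
        show 2 * m + (μ + 1) + (μ + 1) = 2 * m + 2 * μ + 2 by omega]
    push_cast
    ring
  rw [Finset.sum_congr rfl e1, Finset.sum_congr rfl e2, ← Finset.mul_sum, ← Finset.mul_sum,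
      ← Nat.cast_sum, ← Nat.cast_sum]
  apply mul_le_mul_of_nonneg_left _ (by positivity)
  exact_mod_cast S_le m μ

/-- Turán-type inequality `I_μ I_{μ+2} ≤ I_{μ+1}²` at the level of sums. -/
lemma turan {x : ℝ} (hx : 0 < x) (μ : ℕ) :
    (∑' k, bt x μ k) * (∑' k, bt x (μ + 2) k)
      ≤ (∑' k, bt x (μ + 1) k) * (∑' k, bt x (μ + 1) k) := by
  rw [tsum_mul_tsum_eq_tsum_sum_range_of_summable_norm (bt_norm_summable hx μ)
        (bt_norm_summable hx (μ + 2)),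
      tsum_mul_tsum_eq_tsum_sum_range_of_summable_norm (bt_norm_summable hx (μ + 1))
        (bt_norm_summable hx (μ + 1))]
  exact Summable.tsum_le_tsum (per_m hx μ)
    ((summable_norm_sum_mul_range_of_summable_norm (bt_norm_summable hx μ)
        (bt_norm_summable hx (μ + 2))).of_norm)
    ((summable_norm_sum_mul_range_of_summable_norm (bt_norm_summable hx (μ + 1))
        (bt_norm_summable hx (μ + 1))).of_norm)

lemma besselI_eq (μ : ℕ) (t : ℝ) : besselI (μ : ℤ) t = ∑' k, bt (t / 2) μ k := by
  simp [besselI, bt]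

end BesselAux

/-- Amos's lower bound on ratios of consecutive modified Bessel functions. -/
theorem besselI_ratio_lower_bound (n : ℕ) (hn : 1 ≤ n) (t : ℝ) (ht : 0 < t) :
    Real.sqrt (1 + (((n : ℝ) + 1) / t) ^ 2) - ((n : ℝ) + 1) / t
      ≤ besselI (n + 1) t / besselI n t := by
  open BesselAux in
  have hx : (0 : ℝ) < t / 2 := by linarith
  have hcast : ((n : ℤ) + 1) = ((n + 1 : ℕ) : ℤ) := by push_cast; ring
  rw [hcast, besselI_eq (n + 1) t, besselI_eq n t]
  set x := t / 2
  set A := ∑' k, BesselAux.bt x n k with hA_def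
  set B := ∑' k, BesselAux.bt x (n + 1) k with hB_def
  set C := ∑' k, BesselAux.bt x (n + 2) k with hC_def
  have hA : 0 < A := bt_tsum_pos hx n
  have hB : 0 < B := bt_tsum_pos hx (n + 1)
  have hC : 0 < C := bt_tsum_pos hx (n + 2)
  have hrec : A = C + (((n : ℝ) + 1) / x) * B := bt_recur hx n
  have htu : A * C ≤ B * B := turan hx n
  set a : ℝ := ((n : ℝ) + 1) / t with ha_def
  have ha : 0 < a := by positivity
  have hax : ((n : ℝ) + 1) / x = 2 * a := by
    rw [ha_def]
    field_simp [x]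
    ring
  rw [hax] at hrec
  have h2 : A * A ≤ B * B + 2 * a * B * A := by nlinarith [htu, hrec]
  set r : ℝ := B / A with hr_def
  have hrA : B = r * A := by rw [hr_def, div_mul_cancel₀ B hA.ne']
  rw [hrA] at h2
  have hkey : 1 + a ^ 2 ≤ (a + r) ^ 2 := by nlinarith [h2, mul_pos hA hA]
  have := Real.sqrt_le_sqrt hkey
  rw [Real.sqrt_sq (by positivity : (0:ℝ) ≤ a + r)] at this
  linarith
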